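/- A shortcut is never used from its deep umbra: if s ∈ S is a shortcut and p ∈ Û(s), then for every q ∈ C one has d_S(p,q) = d_{S∖{s}}(p,q); that is, no shortest path from p to q uses the shortcut s. -/

import Mathlib

open Real MeasureTheory

/-- Arc distance between points on the unit circle, given by their polar angles:
the length of the shorter arc between them. -/
noncomputable def arcDist (p q : ℝ) : ℝ := ⨅ n : ℤ, |p - q + 2 * π * n|

/-- Euclidean length of the chord between the circle points with angles `u` and `v`. -/
noncomputable def chordLen (u v : ℝ) : ℝ := 2 * Real.sin (arcDist u v / 2)

/-- A pair of angles is a genuine shortcut (chord) if its endpoints are distinct points. -/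
def IsShortcut (s : ℝ × ℝ) : Prop := arcDist s.1 s.2 ≠ 0

/-- δ(a) = arcsin(a/2) - a/2. -/
noncomputable def sdelta (a : ℝ) : ℝ := Real.arcsin (a / 2) - a / 2

/-- Cost of a path that starts at `p`, fully traverses the listed chords in order
(travelling along the circle in between), and ends at `q`. -/
noncomputable def walkCost (q : ℝ) : ℝ → List (ℝ × ℝ) → ℝ
  | p, [] => arcDist p q
  | p, e :: L => arcDist p e.1 + chordLen e.1 e.2 + walkCost q e.2 L

/-- Shortest-path distance from `p` to `q` using the shortcuts of `S`
(each usable in either orientation, and always traversed completely). -/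
noncomputable def dS (S : Finset (ℝ × ℝ)) (p q : ℝ) : ℝ :=
  sInf {c | ∃ L : List (ℝ × ℝ), (∀ e ∈ L, e ∈ S ∨ (e.2, e.1) ∈ S) ∧ c = walkCost q p L}

/-- Diameter of the circle augmented with the shortcuts of `S`. -/
noncomputable def diamS (S : Finset (ℝ × ℝ)) : ℝ :=
  sSup {d | ∃ p q : ℝ, d = dS S p q}

/-- diam(k): the optimal diameter achievable with `k` shortcuts. -/
noncomputable def diamK (k : ℕ) : ℝ :=
  sInf {d | ∃ S : Finset (ℝ × ℝ), S.card = k ∧ (∀ s ∈ S, IsShortcut s) ∧ d = diamS S}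

/-- Distance from `p` to `q` when a single shortcut with endpoints `u`, `v` is available. -/
noncomputable def dOne (u v p q : ℝ) : ℝ :=
  min (arcDist p q)
    (min (arcDist p u + chordLen u v + arcDist v q)
      (arcDist p v + chordLen u v + arcDist u q))

/-- Two angles represent the same point of the circle. -/
def SamePoint (p q : ℝ) : Prop := arcDist p q = 0

/-- Two pairs of angles represent the same chord of the circle. -/
def SameChord (s t : ℝ × ℝ) : Prop :=
  (SamePoint s.1 t.1 ∧ SamePoint s.2 t.2) ∨ (SamePoint s.1 t.2 ∧ SamePoint s.2 t.1)

/-- `p` lies in the deep umbra of the shortcut from `u` to `u + β`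
(where `0 < β ≤ π` is the counterclockwise arc spanned by the shortcut):
`p` lies in the inner umbra, and `|p u'| + |s| ≥ d(p, v')` where `u'` is the
endpoint closer to `p` and `v'` the other one. -/
def InDeepUmbra (u β p : ℝ) : Prop :=
  (∃ t : ℝ, sdelta (chordLen u (u + β)) ≤ t ∧ t ≤ β - sdelta (chordLen u (u + β)) ∧
    arcDist p (u + t) = 0) ∧
  (arcDist p u ≤ arcDist p (u + β) →
    arcDist p (u + β) ≤ chordLen p u + chordLen u (u + β)) ∧
  (arcDist p (u + β) ≤ arcDist p u →
    arcDist p u ≤ chordLen p (u + β) + chordLen u (u + β))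

/-- `d` equals δ*_k : for `k ∈ {3,4,5}` this is `δ(a*_k)` where `a*_k + δ(a*_k) = (k-1)π/k`,
and for `k = 6` it is `δ(2) = π/2 - 1`. -/
def dstarSpec (k : ℕ) (d : ℝ) : Prop :=
  (k = 6 ∧ d = sdelta 2) ∨
    (∃ a, a ∈ Set.Icc (0 : ℝ) 2 ∧ a + sdelta a = ((k : ℝ) - 1) * π / k ∧ d = sdelta a)

namespace Stmt11Aux

noncomputable def adr (x : ℝ) : ℝ := x - 2 * π * (round (x / (2 * π)) : ℤ)

lemma two_pi_pos : (0:ℝ) < 2 * π := by positivity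

lemma abs_adr_le (x : ℝ) : |adr x| ≤ π := by
  have h := abs_sub_round (x / (2 * π))
  have he : adr x = (2 * π) * (x / (2 * π) - (round (x / (2*π)) : ℤ)) := by
    unfold adr; field_simp
  rw [he, abs_mul, abs_of_pos two_pi_pos]
  nlinarith [pi_pos]

lemma abs_adr_le_shift (x : ℝ) (n : ℤ) : |adr x| ≤ |x + 2 * π * n| := by
  set m : ℤ := round (x / (2 * π)) + n with hm
  have he : x + 2 * π * n = adr x + 2 * π * m := by
    simp only [adr, hm]; push_cast; ring
  rcases eq_or_ne m 0 with h0 | h0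
  · rw [he, h0]; simp
  · have h1 : (1:ℝ) ≤ |(m:ℝ)| := by
      rw [← Int.cast_abs]; exact_mod_cast Int.one_le_abs h0
    have h2 : 2 * π ≤ |2 * π * m| := by
      rw [abs_mul, abs_of_pos two_pi_pos]
      nlinarith [pi_pos]
    have h3 := abs_adr_le x
    have h4 : |2 * π * (m:ℝ)| - |adr x| ≤ |adr x + 2 * π * m| := by
      have h5 : |2 * π * (m:ℝ)| ≤ |adr x + 2 * π * m| + |adr x| := by
        calc |2 * π * (m:ℝ)| = |(adr x + 2 * π * m) + (- adr x)| := by ring_nf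
        _ ≤ |adr x + 2 * π * m| + |(- adr x)| := abs_add_le _ _
        _ = |adr x + 2 * π * m| + |adr x| := by rw [abs_neg]
      linarith
    rw [he]; linarith [pi_pos]

lemma bdd (p q : ℝ) : BddBelow (Set.range fun n : ℤ => |p - q + 2 * π * n|) := by
  exact ⟨0, by rintro _ ⟨n, rfl⟩; positivity⟩

lemma arcDist_eq (p q : ℝ) : arcDist p q = |adr (p - q)| := by
  refine le_antisymm ?_ (le_ciInf fun n => abs_adr_le_shift (p - q) n)
  have := ciInf_le (bdd p q) (-(round ((p - q) / (2 * π)) : ℤ))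
  refine this.trans_eq ?_
  simp only [adr]; push_cast; ring_nf

lemma arcDist_nonneg (p q : ℝ) : 0 ≤ arcDist p q := by
  rw [arcDist_eq]; positivity

lemma arcDist_le_pi (p q : ℝ) : arcDist p q ≤ π := by
  rw [arcDist_eq]; exact abs_adr_le _

lemma arcDist_symm (p q : ℝ) : arcDist p q = arcDist q p := by
  unfold arcDist
  refine le_antisymm ?_ ?_ <;>
  · refine le_ciInf fun n => ?_
    refine (ciInf_le (bdd _ _) (-n)).trans_eq ?_
    rw [← abs_neg]; push_cast; ring_nf

lemma arcDist_triangle (p q r : ℝ) : arcDist p r ≤ arcDist p q + arcDist q r := by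
  have key : ∀ n m : ℤ, arcDist p r ≤ |p - q + 2*π*n| + |q - r + 2*π*m| := by
    intro n m
    have h1 : arcDist p r ≤ |p - r + 2*π*((n+m : ℤ) : ℝ)| := ciInf_le (bdd p r) (n+m)
    refine h1.trans ?_
    have he : p - r + 2*π*((n+m : ℤ) : ℝ) = (p - q + 2*π*n) + (q - r + 2*π*m) := by push_cast; ring
    rw [he]; exact abs_add_le _ _
  have h2 : ∀ n : ℤ, arcDist p r - arcDist q r ≤ |p - q + 2*π*n| := by
    intro n
    have : arcDist p r - |p - q + 2*π*n| ≤ arcDist q r :=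
      le_ciInf fun m => by linarith [key n m]
    linarith
  have := le_ciInf h2
  unfold arcDist at *
  linarith

lemma chordLen_eq_dist (p q : ℝ) :
    chordLen p q = ‖Complex.exp (p * Complex.I) - Complex.exp (q * Complex.I)‖ := by
  have hd0 := arcDist_nonneg p q
  have hdpi := arcDist_le_pi p q
  have hsin : 0 ≤ Real.sin (arcDist p q / 2) :=
    Real.sin_nonneg_of_nonneg_of_le_pi (by linarith) (by linarith [pi_pos])
  have hL : 0 ≤ chordLen p q := by unfold chordLen; linarith
  have hR : 0 ≤ ‖Complex.exp (p * Complex.I) - Complex.exp (q * Complex.I)‖ :=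
    norm_nonneg _
  -- squares equal
  have hsq2 : ∀ x : ℝ, Real.sin (x/2)^2 = (1 - Real.cos x)/2 := by
    intro x
    have h : Real.cos (2 * (x/2)) = 1 - 2 * Real.sin (x/2)^2 := by
      rw [Real.cos_two_mul, Real.sin_sq]; ring
    rw [show 2*(x/2) = x by ring] at h
    linarith
  have hcosd : Real.cos (arcDist p q) = Real.cos (p - q) := by
    rw [arcDist_eq, Real.cos_abs]
    have : adr (p - q) = (p - q) - (round ((p-q)/(2*π)) : ℤ) * (2 * π) := by
      unfold adr; ring
    rw [this, Real.cos_periodic.sub_int_mul_eq]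
  have hLsq : chordLen p q ^ 2 = 2 - 2 * Real.cos (p - q) := by
    unfold chordLen
    rw [mul_pow, hsq2, hcosd]; ring
  have hRsq : ‖Complex.exp (p * Complex.I) - Complex.exp (q * Complex.I)‖ ^ 2
      = 2 - 2 * Real.cos (p - q) := by
    rw [Complex.sq_norm]
    rw [show (p:ℂ) * Complex.I = (p:ℂ) * Complex.I from rfl]
    rw [Complex.exp_mul_I, Complex.exp_mul_I]
    simp [Complex.normSq_apply, Complex.cos_ofReal_re, Complex.sin_ofReal_re,
      Complex.add_re, Complex.add_im, Complex.mul_re, Complex.mul_im, Real.cos_sub]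
    nlinarith [Real.sin_sq_add_cos_sq p, Real.sin_sq_add_cos_sq q]
  have h := hLsq.trans hRsq.symm
  nlinarith [h, hL, hR]

lemma chordLen_nonneg (p q : ℝ) : 0 ≤ chordLen p q := by
  rw [chordLen_eq_dist]; exact norm_nonneg _

lemma chordLen_symm (p q : ℝ) : chordLen p q = chordLen q p := by
  unfold chordLen; rw [arcDist_symm]

lemma chordLen_triangle (p q r : ℝ) : chordLen p r ≤ chordLen p q + chordLen q r := by
  rw [chordLen_eq_dist, chordLen_eq_dist, chordLen_eq_dist]
  have := dist_triangle (Complex.exp (p * Complex.I)) (Complex.exp (q * Complex.I))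
    (Complex.exp (r * Complex.I))
  simpa [Complex.dist_eq] using this

lemma chordLen_le_arcDist (p q : ℝ) : chordLen p q ≤ arcDist p q := by
  unfold chordLen
  have h0 := arcDist_nonneg p q
  rcases eq_or_lt_of_le h0 with h | h
  · rw [← h]; simp
  · have := Real.sin_lt (show 0 < arcDist p q / 2 by linarith)
    linarith

lemma chordLen_mono {p a b : ℝ} (h : arcDist p a ≤ arcDist p b) :
    chordLen p a ≤ chordLen p b := by
  unfold chordLen
  have h1 := arcDist_nonneg p a
  have h2 := arcDist_le_pi p b
  have h3 := arcDist_nonneg p b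
  have := Real.strictMonoOn_sin.monotoneOn
    (Set.mem_Icc.2 ⟨by linarith [pi_pos], by linarith⟩)
    (Set.mem_Icc.2 ⟨by linarith [pi_pos], by linarith⟩)
    (by linarith : arcDist p a / 2 ≤ arcDist p b / 2)
  linarith

lemma walkCost_nonneg (q : ℝ) : ∀ (L : List (ℝ × ℝ)) (p : ℝ), 0 ≤ walkCost q p L
  | [], p => arcDist_nonneg p q
  | e :: L, p => by
      have h := walkCost_nonneg q L e.2
      have h1 := arcDist_nonneg p e.1
      have h2 := chordLen_nonneg e.1 e.2
      simp only [walkCost]; linarith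

lemma walkCost_append (q : ℝ) (e : ℝ × ℝ) (L2 : List (ℝ × ℝ)) :
    ∀ (L1 : List (ℝ × ℝ)) (p : ℝ),
    walkCost q p (L1 ++ e :: L2) = walkCost e.1 p L1 + chordLen e.1 e.2 + walkCost q e.2 L2
  | [], p => by simp [walkCost]
  | f :: L1, p => by
      have ih := walkCost_append q e L2 L1 f.2
      simp only [List.cons_append, walkCost]
      rw [ih]; ring

lemma chordLen_le_walkCost (a : ℝ) :
    ∀ (L : List (ℝ × ℝ)) (p : ℝ), chordLen p a ≤ walkCost a p L
  | [], p => (chordLen_le_arcDist p a).trans_eq rfl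
  | e :: L, p => by
      have h := chordLen_le_walkCost a L e.2
      have h1 := chordLen_triangle p e.1 a
      have h2 := chordLen_triangle e.1 e.2 a
      have h3 := chordLen_le_arcDist p e.1
      simp only [walkCost]; linarith

lemma walkCost_shift {p b C : ℝ} (h : arcDist p b ≤ C) (q : ℝ) (L : List (ℝ × ℝ)) :
    walkCost q p L ≤ C + walkCost q b L := by
  cases L with
  | nil =>
      have := arcDist_triangle p b q
      simp only [walkCost]; linarith
  | cons e L =>
      have := arcDist_triangle p b e.1
      simp only [walkCost]; linarith

/-- bad edge predicate -/
def Bad (u v : ℝ) (e : ℝ × ℝ) : Prop := e = (u, v) ∨ e = (v, u)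

lemma decomp (u v : ℝ) : ∀ L : List (ℝ × ℝ),
    (∀ e ∈ L, ¬ Bad u v e) ∨
    ∃ L1 e L2, L = L1 ++ e :: L2 ∧ Bad u v e ∧ ∀ f ∈ L2, ¬ Bad u v f
  | [] => Or.inl (by simp)
  | a :: L => by
      rcases decomp u v L with h | ⟨L1, e, L2, rfl, he, hL2⟩
      · by_cases ha : Bad u v a
        · exact Or.inr ⟨[], a, L, by simp, ha, h⟩
        · refine Or.inl ?_
          intro f hf
          rcases List.mem_cons.1 hf with rfl | hf
          · exact ha
          · exact h f hf
      · exact Or.inr ⟨a :: L1, e, L2, by simp, he, hL2⟩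

end Stmt11Aux


open Stmt11Aux

/-- a shortcut is never used from its deep umbra. Let the shortcut `s`
span the counterclockwise arc from `u` to `v = u + β` with `0 < β ≤ π`. If `s ∈ S`
(possibly in reversed orientation) and `p` lies in the deep umbra of `s`, then for
every `q` we have `d_S(p,q) = d_{S∖{s}}(p,q)`. -/
theorem stmt11 (u β : ℝ) (hβ : 0 < β) (hβπ : β ≤ π) (p : ℝ)
    (hp : InDeepUmbra u β p) (S : Finset (ℝ × ℝ)) (hS : (u, u + β) ∈ S) :
    ∀ q : ℝ, dS S p q = dS (S \ {(u, u + β), (u + β, u)}) p q := by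
  intro q
  set v := u + β with hv
  set S' := S \ ({(u, v), (v, u)} : Finset (ℝ × ℝ)) with hS'
  set K := chordLen u v with hK
  -- key inequalities from the deep umbra
  have claim1 : arcDist p v ≤ chordLen p u + K := by
    rcases le_total (arcDist p u) (arcDist p v) with h | h
    · exact hp.2.1 h
    · have h2 := hp.2.2 h
      have h3 : chordLen p v ≤ chordLen p u := chordLen_mono h
      linarith
  have claim2 : arcDist p u ≤ chordLen p v + K := by
    rcases le_total (arcDist p v) (arcDist p u) with h | h
    · exact hp.2.2 h
    · have h2 := hp.2.1 h
      have h3 : chordLen p u ≤ chordLen p v := chordLen_mono h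
      linarith
  have hPne : Set.Nonempty {c | ∃ L : List (ℝ × ℝ),
      (∀ e ∈ L, e ∈ S ∨ (e.2, e.1) ∈ S) ∧ c = walkCost q p L} :=
    ⟨walkCost q p [], [], by simp, rfl⟩
  have hP'bdd : BddBelow {c | ∃ L : List (ℝ × ℝ),
      (∀ e ∈ L, e ∈ S' ∨ (e.2, e.1) ∈ S') ∧ c = walkCost q p L} := by
    refine ⟨0, ?_⟩
    rintro c ⟨L, _, rfl⟩
    exact walkCost_nonneg q L p
  have hPbdd : BddBelow {c | ∃ L : List (ℝ × ℝ),
      (∀ e ∈ L, e ∈ S ∨ (e.2, e.1) ∈ S) ∧ c = walkCost q p L} := by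
    refine ⟨0, ?_⟩
    rintro c ⟨L, _, rfl⟩
    exact walkCost_nonneg q L p
  have hsub : S' ⊆ S := Finset.sdiff_subset
  refine le_antisymm ?_ ?_
  · -- dS S ≤ dS S'
    refine csInf_le_csInf hPbdd ⟨walkCost q p [], [], by simp, rfl⟩ ?_
    rintro c ⟨L, hL, rfl⟩
    exact ⟨L, fun e he => (hL e he).imp (fun h => hsub h) (fun h => hsub h), rfl⟩
  · -- dS S' ≤ dS S
    refine le_csInf hPne ?_
    rintro c ⟨L, hL, rfl⟩
    -- for non-bad walks, direct membership
    have good : ∀ L : List (ℝ × ℝ), (∀ e ∈ L, e ∈ S ∨ (e.2, e.1) ∈ S) →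
        (∀ e ∈ L, ¬ Bad u v e) → dS S' p q ≤ walkCost q p L := by
      intro L hL hfree
      refine csInf_le hP'bdd ⟨L, ?_, rfl⟩
      intro e he
      have hb := hfree e he
      have hne1 : e ≠ (u, v) := fun h => hb (Or.inl h)
      have hne2 : e ≠ (v, u) := fun h => hb (Or.inr h)
      rcases hL e he with h | h
      · exact Or.inl (Finset.mem_sdiff.2 ⟨h, by simp [hne1, hne2]⟩)
      · refine Or.inr (Finset.mem_sdiff.2 ⟨h, ?_⟩)
        simp only [Finset.mem_insert, Finset.mem_singleton]
        push_neg
        constructor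
        · intro hcon
          exact hne2 (by rw [Prod.ext_iff] at hcon ⊢; exact ⟨hcon.2, hcon.1⟩)
        · intro hcon
          exact hne1 (by rw [Prod.ext_iff] at hcon ⊢; exact ⟨hcon.2, hcon.1⟩)
    rcases decomp u v L with hfree | ⟨L1, e, L2, rfl, hbad, hfree⟩
    · exact good L hL hfree
    · -- replace the walk by L2
      have hL2 : ∀ e ∈ L2, e ∈ S ∨ (e.2, e.1) ∈ S := by
        intro f hf
        exact hL f (by simp [hf])
      have key : arcDist p e.2 ≤ chordLen p e.1 + K ∧ chordLen e.1 e.2 = K := by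
        rcases hbad with rfl | rfl
        · exact ⟨claim1, rfl⟩
        · exact ⟨claim2, chordLen_symm v u⟩
      have cost_eq := walkCost_append q e L2 L1 p
      have hpre : chordLen p e.1 ≤ walkCost e.1 p L1 := chordLen_le_walkCost e.1 L1 p
      have hshift : walkCost q p L2 ≤ (chordLen p e.1 + K) + walkCost q e.2 L2 :=
        walkCost_shift key.1 q L2
      have : walkCost q p L2 ≤ walkCost q p (L1 ++ e :: L2) := by
        rw [cost_eq, key.2]
        linarith
      exact (good L2 hL2 hfree).trans this
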